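/- Let $q \geq 3$ and $n \geq 1$ be integers, and let $M : \mathrm{Fin}\,n \to \mathrm{Fin}\,n \to \mathbb{N}$ be a matrix with every row sum and every column sum equal to $q$ (the biadjacency matrix of a $q$-regular bipartite multigraph). Suppose there exists a matrix $M' : \mathrm{Fin}\,n \to \mathrm{Fin}\,n \to \mathbb{N}$ with $M'(i,j) \leq M(i,j)$ for all $i,j$, with every row sum and every column sum of $M'$ equal to $3$ (a $3$-regular spanning subgraph), and such that the permanent $\sum_{\sigma \in S_n} \prod_i M'(i,\sigma(i))$ is not divisible by $3$. Then there exists a matrix $N : \mathrm{Fin}\,n \to \mathrm{Fin}\,n \to \mathbb{N}$ with $N(i,j) \leq M(i,j)$ for all $i,j$, every row sum of $N$ equal to $1$, and every column sum of $N$ different from $1$. -/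

import Mathlib

open Finset

theorem key_perm_identity {n : ℕ} (A : Fin n → Fin n → ZMod 3)
    (hA : ∀ i, ∑ j, A i j = 0) :
    ∑ x : Fin n → Fin n, (∏ i, A i (x i)) *
        ∏ j, ((∑ i, if x i = j then (1 : ZMod 3) else 0) - 1)
      = ∑ σ : Equiv.Perm (Fin n), ∏ i, A i (σ i) := by
  classical
  set g : Fin n → Option (Fin n) → (Fin n → Fin n) → ZMod 3 :=
    fun j o x => o.rec (-1) (fun i => if x i = j then 1 else 0) with hg
  have h1 : ∀ x : Fin n → Fin n,
      (∏ i, A i (x i)) * ∏ j, ((∑ i, if x i = j then (1 : ZMod 3) else 0) - 1)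
      = ∑ ψ : Fin n → Option (Fin n), (∏ i, A i (x i)) * ∏ j, g j (ψ j) x := by
    intro x
    rw [← Finset.mul_sum]
    congr 1
    have e1 : ∀ j, ((∑ i, if x i = j then (1 : ZMod 3) else 0) - 1)
        = ∑ o : Option (Fin n), g j o x := by
      intro j
      rw [Fintype.sum_option]
      show _ = -1 + ∑ i, (if x i = j then (1 : ZMod 3) else 0)
      ring
    rw [Finset.prod_congr rfl (fun j _ => e1 j), Finset.prod_univ_sum]
    rw [Fintype.piFinset_univ]
  -- evaluate inner sum for fixed ψ
  have h2 : ∀ ψ : Fin n → Option (Fin n),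
      ∑ x : Fin n → Fin n, (∏ i, A i (x i)) * ∏ j, g j (ψ j) x
      = (-1) ^ (univ.filter fun j => ψ j = none).card *
          ∏ i, ∑ v, (A i v *
            ∏ j ∈ univ.filter (fun j => ψ j = some i), if v = j then (1 : ZMod 3) else 0) := by
    intro ψ
    have e2 : ∀ x : Fin n → Fin n,
        (∏ i, A i (x i)) * ∏ j, g j (ψ j) x
        = (-1) ^ (univ.filter fun j => ψ j = none).card *
            ∏ i, (A i (x i) *
              ∏ j ∈ univ.filter (fun j => ψ j = some i), if x i = j then (1 : ZMod 3) else 0) := by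
      intro x
      have fib : ∏ j, g j (ψ j) x
          = ∏ o : Option (Fin n), ∏ j ∈ univ.filter (fun j => ψ j = o), g j (ψ j) x :=
        (Finset.prod_fiberwise univ ψ _).symm
      have fib2 : ∀ o : Option (Fin n),
          ∏ j ∈ univ.filter (fun j => ψ j = o), g j (ψ j) x
          = ∏ j ∈ univ.filter (fun j => ψ j = o), g j o x := by
        intro o
        refine Finset.prod_congr rfl fun j hj => ?_
        rw [(Finset.mem_filter.mp hj).2]
      rw [fib, Finset.prod_congr rfl fun o _ => fib2 o, Fintype.prod_option]
      have hnone : ∏ j ∈ univ.filter (fun j => ψ j = none), g j none x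
          = (-1 : ZMod 3) ^ (univ.filter fun j => ψ j = none).card := by
        rw [Finset.prod_const]
      rw [hnone, Finset.prod_mul_distrib]
      ring
    rw [Finset.sum_congr rfl fun x _ => e2 x, ← Finset.mul_sum]
    congr 1
    rw [← Fintype.piFinset_univ]
    exact (Finset.prod_univ_sum (fun _ => (univ : Finset (Fin n)))
      (fun i v => A i v *
        ∏ j ∈ univ.filter (fun j => ψ j = some i), if v = j then (1 : ZMod 3) else 0)).symm
  -- the embedding of permutations
  set e : Equiv.Perm (Fin n) → (Fin n → Option (Fin n)) :=
    fun σ j => some (σ.symm j) with he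
  have einj : ∀ σ τ : Equiv.Perm (Fin n), e σ = e τ → σ = τ := by
    intro σ τ h
    have : ∀ j, σ.symm j = τ.symm j := by
      intro j
      have := congrFun h j
      simpa [he] using this
    have hsymm : σ.symm = τ.symm := Equiv.ext this
    calc σ = σ.symm.symm := rfl
    _ = τ.symm.symm := by rw [hsymm]
    _ = τ := rfl
  have hfibnone : ∀ σ : Equiv.Perm (Fin n),
      (univ.filter fun j => e σ j = none) = ∅ := by
    intro σ
    refine Finset.filter_false_of_mem fun j _ => ?_
    simp [he]
  have hfibsome : ∀ (σ : Equiv.Perm (Fin n)) (i : Fin n),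
      (univ.filter fun j => e σ j = some i) = {σ i} := by
    intro σ i
    ext j
    simp only [Finset.mem_filter, Finset.mem_univ, true_and, Finset.mem_singleton, he,
      Option.some.injEq]
    constructor
    · intro h; rw [← h]; simp
    · intro h; rw [h]; simp
  -- value on the image
  have h3 : ∀ σ : Equiv.Perm (Fin n),
      (-1 : ZMod 3) ^ (univ.filter fun j => e σ j = none).card *
          ∏ i, ∑ v, (A i v *
            ∏ j ∈ univ.filter (fun j => e σ j = some i), if v = j then (1 : ZMod 3) else 0)
      = ∏ i, A i (σ i) := by
    intro σ
    rw [hfibnone σ]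
    simp only [Finset.card_empty, pow_zero, one_mul]
    refine Finset.prod_congr rfl fun i _ => ?_
    rw [hfibsome σ i]
    simp only [Finset.prod_singleton, mul_ite, mul_one, mul_zero]
    rw [Finset.sum_ite_eq' univ (σ i) (fun v => A i v)]
    simp
  -- vanishing off the image
  have h4 : ∀ ψ : Fin n → Option (Fin n), ψ ∉ Finset.image e univ →
      (-1 : ZMod 3) ^ (univ.filter fun j => ψ j = none).card *
          ∏ i, ∑ v, (A i v *
            ∏ j ∈ univ.filter (fun j => ψ j = some i), if v = j then (1 : ZMod 3) else 0)
      = 0 := by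
    intro ψ hψ
    by_contra hne
    have hfac : ∀ i, (∑ v, (A i v *
        ∏ j ∈ univ.filter (fun j => ψ j = some i), if v = j then (1 : ZMod 3) else 0)) ≠ 0 := by
      intro i hi
      exact hne (by rw [Finset.prod_eq_zero (Finset.mem_univ i) hi, mul_zero])
    have hcard : ∀ i, (univ.filter fun j => ψ j = some i).card = 1 := by
      intro i
      rcases Nat.lt_trichotomy (univ.filter fun j => ψ j = some i).card 1 with h | h | h
      · exfalso
        apply hfac i
        have hempty : (univ.filter fun j => ψ j = some i) = ∅ :=
          Finset.card_eq_zero.mp (Nat.lt_one_iff.mp h)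
        rw [hempty]
        simp [hA i]
      · exact h
      · exfalso
        apply hfac i
        obtain ⟨a, ha, b, hb, hab⟩ := Finset.one_lt_card.mp h
        refine Finset.sum_eq_zero fun v _ => ?_
        rcases eq_or_ne v a with rfl | hva
        · rw [Finset.prod_eq_zero hb (by simp [hab]), mul_zero]
        · rw [Finset.prod_eq_zero ha (by simp [hva]), mul_zero]
    have hex : ∀ i, ∃ j, (univ.filter fun j => ψ j = some i) = {j} :=
      fun i => Finset.card_eq_one.mp (hcard i)
    choose u hu using hex
    have hψu : ∀ i, ψ (u i) = some i := by
      intro i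
      have : u i ∈ (univ.filter fun j => ψ j = some i) := by rw [hu i]; simp
      exact (Finset.mem_filter.mp this).2
    have huinj : Function.Injective u := by
      intro a b hab
      have := hψu a
      rw [hab, hψu b] at this
      exact Option.some.inj this.symm
    have hubij : Function.Bijective u := Finite.injective_iff_bijective.mp huinj
    set π : Equiv.Perm (Fin n) := Equiv.ofBijective u hubij with hπ
    apply hψ
    refine Finset.mem_image.mpr ⟨π, Finset.mem_univ _, ?_⟩
    funext j
    show some (π.symm j) = ψ j
    have hj : u (π.symm j) = j := π.apply_symm_apply j
    calc some (π.symm j) = ψ (u (π.symm j)) := (hψu _).symm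
    _ = ψ j := by rw [hj]
  -- assemble
  calc
    ∑ x : Fin n → Fin n, (∏ i, A i (x i)) *
        ∏ j, ((∑ i, if x i = j then (1 : ZMod 3) else 0) - 1)
      = ∑ x : Fin n → Fin n, ∑ ψ : Fin n → Option (Fin n),
          (∏ i, A i (x i)) * ∏ j, g j (ψ j) x := Finset.sum_congr rfl fun x _ => h1 x
    _ = ∑ ψ : Fin n → Option (Fin n), ∑ x : Fin n → Fin n,
          (∏ i, A i (x i)) * ∏ j, g j (ψ j) x := Finset.sum_comm
    _ = ∑ ψ : Fin n → Option (Fin n),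
          (-1) ^ (univ.filter fun j => ψ j = none).card *
          ∏ i, ∑ v, (A i v *
            ∏ j ∈ univ.filter (fun j => ψ j = some i), if v = j then (1 : ZMod 3) else 0) :=
        Finset.sum_congr rfl fun ψ _ => h2 ψ
    _ = ∑ ψ ∈ Finset.image e univ,
          (-1) ^ (univ.filter fun j => ψ j = none).card *
          ∏ i, ∑ v, (A i v *
            ∏ j ∈ univ.filter (fun j => ψ j = some i), if v = j then (1 : ZMod 3) else 0) :=
        (Finset.sum_subset (Finset.subset_univ _) fun ψ _ hψ => h4 ψ hψ).symm
    _ = ∑ σ : Equiv.Perm (Fin n),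
          (-1) ^ (univ.filter fun j => e σ j = none).card *
          ∏ i, ∑ v, (A i v *
            ∏ j ∈ univ.filter (fun j => e σ j = some i), if v = j then (1 : ZMod 3) else 0) :=
        Finset.sum_image fun σ _ τ _ h => einj σ τ h
    _ = ∑ σ : Equiv.Perm (Fin n), ∏ i, A i (σ i) := Finset.sum_congr rfl fun σ _ => h3 σ


theorem antifactor_from_cubic_spanning_subgraph
    (q n : ℕ) (hq : 3 ≤ q) (hn : 1 ≤ n)
    (M : Fin n → Fin n → ℕ)
    (hrow : ∀ i, ∑ j, M i j = q)
    (hcol : ∀ j, ∑ i, M i j = q)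
    (M' : Fin n → Fin n → ℕ)
    (hle : ∀ i j, M' i j ≤ M i j)
    (hrow' : ∀ i, ∑ j, M' i j = 3)
    (hcol' : ∀ j, ∑ i, M' i j = 3)
    (hpm : ¬ (3 ∣ ∑ σ : Equiv.Perm (Fin n), ∏ i, M' i (σ i))) :
    ∃ N : Fin n → Fin n → ℕ,
      (∀ i j, N i j ≤ M i j) ∧
      (∀ i, ∑ j, N i j = 1) ∧
      (∀ j, ∑ i, N i j ≠ 1) := by
  classical
  set A : Fin n → Fin n → ZMod 3 := fun i j => (M' i j : ZMod 3) with hA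
  have hrowA : ∀ i, ∑ j, A i j = 0 := by
    intro i
    have : ((∑ j, M' i j : ℕ) : ZMod 3) = ((3 : ℕ) : ZMod 3) := by rw [hrow' i]
    rw [Nat.cast_sum] at this
    exact this.trans (by decide)
  have hper : (∑ σ : Equiv.Perm (Fin n), ∏ i, A i (σ i)) ≠ 0 := by
    have : ((∑ σ : Equiv.Perm (Fin n), ∏ i, M' i (σ i) : ℕ) : ZMod 3) ≠ 0 := by
      rwa [Ne, ZMod.natCast_eq_zero_iff]
    rw [Nat.cast_sum] at this
    convert this using 2 with σ
    rw [Nat.cast_prod]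
  rw [← key_perm_identity A hrowA] at hper
  obtain ⟨x, -, hx⟩ := Finset.exists_ne_zero_of_sum_ne_zero hper
  have hw : (∏ i, A i (x i)) ≠ 0 := fun h => hx (by rw [h, zero_mul])
  have hd : (∏ j, ((∑ i, if x i = j then (1 : ZMod 3) else 0) - 1)) ≠ 0 :=
    fun h => hx (by rw [h, mul_zero])
  refine ⟨fun i j => if x i = j then 1 else 0, ?_, ?_, ?_⟩
  · intro i j
    by_cases h : x i = j
    · simp only [h, if_pos rfl]
      have h1 : M' i j ≠ 0 := by
        intro h0
        have : A i (x i) = 0 := by rw [hA]; simp [h, h0]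
        exact hw (Finset.prod_eq_zero (Finset.mem_univ i) this)
      calc 1 ≤ M' i j := Nat.one_le_iff_ne_zero.mpr h1
      _ ≤ M i j := hle i j
    · simp [h]
  · intro i
    simp [Finset.sum_ite_eq]
  · intro j hj
    have hfac : ((∑ i, if x i = j then (1 : ZMod 3) else 0) - 1) ≠ 0 := by
      intro h
      exact hd (Finset.prod_eq_zero (Finset.mem_univ j) h)
    apply hfac
    have hj' : (∑ i, if x i = j then (1 : ℕ) else 0) = 1 := hj
    have h2 : (∑ i, if x i = j then (1 : ZMod 3) else 0) = 1 := by
      have e3 : (∑ i, if x i = j then (1 : ZMod 3) else 0)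
          = ∑ i, ((if x i = j then 1 else 0 : ℕ) : ZMod 3) :=
        Finset.sum_congr rfl fun i _ => by by_cases h : x i = j <;> simp [h]
      rw [e3, ← Nat.cast_sum, hj', Nat.cast_one]
    rw [h2, sub_self]
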